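/- Let A be a commutative von Neumann regular ring, S a metrizable subset of an A-module M with modular metric d, x, x₁,…,xₙ ∈ S, and a₁,…,aₙ ∈ B(A) with aᵢaⱼ = 0 for i ≠ j and a₁ + ⋯ + aₙ = 1. Then aᵢ·d(x,xᵢ) = 0 for all i (i.e., x is the convex combination of x₁,…,xₙ with coefficients a₁,…,aₙ) if and only if x = a₁x₁ + ⋯ + aₙxₙ in M. -/
import Mathlib


/-- A subset `S` of a module `M` over `A` is metrizable if the annihilator of `x - y`
is a principal ideal for all `x, y ∈ S`. -/
def IsMetrizable (A : Type) {M : Type} [CommRing A] [AddCommGroup M] [Module A M]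
    (S : Set M) : Prop :=
  ∀ x ∈ S, ∀ y ∈ S, (Ideal.torsionOf A M (x - y)).IsPrincipal

/-- The convex closure of `S` in `M`: all combinations `a₁ x₁ + ⋯ + aₖ xₖ` with
`xᵢ ∈ S`, the `aᵢ` idempotent with pairwise zero products and `a₁ + ⋯ + aₖ = 1`. -/
def convSet (A : Type) {M : Type} [CommRing A] [AddCommGroup M] [Module A M]
    (S : Set M) : Set M :=
  {x | ∃ (k : ℕ) (a : Fin k → A) (xs : Fin k → M),
    (∀ i, a i * a i = a i) ∧ (∀ i, xs i ∈ S) ∧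
    (∀ i j, i ≠ j → a i * a j = 0) ∧ (∑ i, a i) = 1 ∧ x = ∑ i, a i • xs i}

/-- For a metrizable subset `S` of an `A`-module with modular metric `d` (so `d x y` is
the idempotent with `a • (x - y) = 0 ↔ a * (1 - d x y) = a`, i.e. the complement of the
idempotent generator of `Ann(x - y)`), a point `x ∈ S` is the convex combination of
`x₁, …, xₖ ∈ S` with coefficients `a₁, …, aₖ` iff `x = a₁ x₁ + ⋯ + aₖ xₖ` in `M`. -/
theorem stmt4 {A M : Type} [CommRing A] [AddCommGroup M] [Module A M]
    (hreg : ∀ a : A, ∃ b, a * b * a = a)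
    (S : Set M) (hS : IsMetrizable A S)
    (d : M → M → A)
    (hd : ∀ x ∈ S, ∀ y ∈ S, d x y * d x y = d x y ∧
      ∀ a : A, a • (x - y) = 0 ↔ a * (1 - d x y) = a)
    {k : ℕ} (x : M) (xs : Fin k → M) (a : Fin k → A)
    (hx : x ∈ S) (hxs : ∀ i, xs i ∈ S)
    (hidem : ∀ i, a i * a i = a i)
    (horth : ∀ i j, i ≠ j → a i * a j = 0) (hsum : (∑ i, a i) = 1) :
    (∀ i, a i * d x (xs i) = 0) ↔ x = ∑ i, a i • xs i := by
  constructor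
  · intro h
    have heq : ∀ i, a i • x = a i • xs i := by
      intro i
      have := (hd x hx (xs i) (hxs i)).2 (a i)
      have h2 : a i * (1 - d x (xs i)) = a i := by
        rw [mul_sub, mul_one, h i, sub_zero]
      have h3 : a i • (x - xs i) = 0 := this.mpr h2
      rw [smul_sub, sub_eq_zero] at h3
      exact h3
    calc x = (∑ i, a i) • x := by rw [hsum, one_smul]
      _ = ∑ i, a i • x := Finset.sum_smul
      _ = ∑ i, a i • xs i := Finset.sum_congr rfl fun i _ => heq i
  · intro h i
    have hax : a i • x = a i • xs i := by
      rw [h, Finset.smul_sum]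
      rw [Finset.sum_eq_single i]
      · rw [smul_smul, hidem]
      · intro j _ hj
        rw [smul_smul, horth i j (Ne.symm hj), zero_smul]
      · intro hi; exact absurd (Finset.mem_univ i) hi
    have h3 : a i • (x - xs i) = 0 := by rw [smul_sub, hax, sub_self]
    have h2 := ((hd x hx (xs i) (hxs i)).2 (a i)).mp h3
    rw [mul_sub, mul_one] at h2
    exact sub_eq_self.mp h2
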